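/- arXiv:1210.1171 — 3 statements merged into one kernel-verified Lean document; each statement's English description precedes it below -/
import Mathlib

section
/- Let T₁, T₂ be linear, trace-preserving, positive maps on M_d(ℂ), let ρ₂ be a stationary state of T₂, and set ρ₁ := T₁^∞(ρ₂), a stationary state of T₁. Then ρ₁ − ρ₂ = Z(T₁)((T₁ − T₂)(ρ₂)), where Z(T₁) := (id − (T₁ − T₁^∞))^{-1}. -/
open Matrix Filter
open scoped ComplexOrder

/-- Trace norm (Schatten 1-norm) of a complex matrix: `tr √(XᴴX)`. -/
noncomputable def traceNorm {d : ℕ} (X : Matrix (Fin d) (Fin d) ℂ) : ℝ :=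
  ((Matrix.posSemidef_conjTranspose_mul_self X).1.eigenvectorUnitary.1 *
    diagonal (((↑) : ℝ → ℂ) ∘ (√·) ∘ (Matrix.posSemidef_conjTranspose_mul_self X).1.eigenvalues) *
    (star (Matrix.posSemidef_conjTranspose_mul_self X).1.eigenvectorUnitary :
      Matrix (Fin d) (Fin d) ℂ)).trace.re

/-- Linear endomorphisms of `M_d(ℂ)` (superoperators). -/
abbrev MatEnd (d : ℕ) := Module.End ℂ (Matrix (Fin d) (Fin d) ℂ)

/-- Trace-preserving map. -/
def IsTP {d : ℕ} (T : MatEnd d) : Prop := ∀ X, (T X).trace = X.trace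

/-- Positive map: maps PSD matrices to PSD matrices. -/
def IsPos {d : ℕ} (T : MatEnd d) : Prop := ∀ X, X.PosSemidef → (T X).PosSemidef

/-- Hermiticity-preserving map. -/
def IsHP {d : ℕ} (T : MatEnd d) : Prop := ∀ X, (T X)ᴴ = T Xᴴ

/-- Induced 1→1 norm: `sup_{X ≠ 0} ‖T X‖₁ / ‖X‖₁`. -/
noncomputable def norm1to1 {d : ℕ} (T : MatEnd d) : ℝ :=
  sSup {r | ∃ X, X ≠ 0 ∧ r = traceNorm (T X) / traceNorm X}

/-- Trace-norm contraction coefficient: sup over nonzero Hermitian traceless `σ`. -/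
noncomputable def tau {d : ℕ} (T : MatEnd d) : ℝ :=
  sSup {r | ∃ σ : Matrix (Fin d) (Fin d) ℂ,
    σ.IsHermitian ∧ σ.trace = 0 ∧ σ ≠ 0 ∧ r = traceNorm (T σ) / traceNorm σ}

/-- Density matrix: positive semidefinite with unit trace. -/
def IsDensity {d : ℕ} (ρ : Matrix (Fin d) (Fin d) ℂ) : Prop := ρ.PosSemidef ∧ ρ.trace = 1

/-- `Tinf` is the Cesàro-mean fixed point projection of `T`. -/
def IsCesaroProj {d : ℕ} (T Tinf : MatEnd d) : Prop :=
  ∀ X, Tendsto (fun n : ℕ => (n : ℂ)⁻¹ • ∑ k ∈ Finset.range n, (T ^ (k + 1)) X)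
    atTop (nhds (Tinf X))

lemma inv_natCast_tendsto : Tendsto (fun n : ℕ => ((n : ℂ))⁻¹) atTop (nhds 0) := by
  have h : Tendsto (fun n : ℕ => ((n : ℝ))⁻¹) atTop (nhds 0) :=
    tendsto_inv_atTop_nhds_zero_nat
  have h2 := (Complex.continuous_ofReal.tendsto 0).comp h
  rw [Complex.ofReal_zero] at h2
  exact h2.congr fun n => by simp

lemma cesaro_pow_div {d : ℕ} (T Tinf : MatEnd d) (hinf : IsCesaroProj T Tinf)
    (X : Matrix (Fin d) (Fin d) ℂ) :
    Tendsto (fun n : ℕ => (n : ℂ)⁻¹ • (T ^ (n + 1)) X) atTop (nhds 0) := by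
  set S : ℕ → Matrix (Fin d) (Fin d) ℂ := fun n => ∑ k ∈ Finset.range n, (T ^ (k + 1)) X
  set a : ℕ → Matrix (Fin d) (Fin d) ℂ := fun n => (n : ℂ)⁻¹ • S n
  have ha : Tendsto a atTop (nhds (Tinf X)) := hinf X
  have ha1 : Tendsto (fun n => a (n + 1)) atTop (nhds (Tinf X)) :=
    ha.comp (tendsto_add_atTop_nat 1)
  have hc : Tendsto (fun n : ℕ => (1 : ℂ) + ((n : ℂ))⁻¹) atTop (nhds 1) := by
    simpa using tendsto_const_nhds.add inv_natCast_tendsto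
  have key : ∀ n : ℕ, 1 ≤ n → (n : ℂ)⁻¹ • (T ^ (n + 1)) X
      = ((1 : ℂ) + ((n : ℂ))⁻¹) • a (n + 1) - a n := by
    intro n hn
    have hn' : (n : ℂ) ≠ 0 := Nat.cast_ne_zero.2 (by omega)
    have hsucc : S (n + 1) = S n + (T ^ (n + 1)) X := Finset.sum_range_succ _ _
    have h1 : ((1 : ℂ) + ((n : ℂ))⁻¹) • a (n + 1) = (n : ℂ)⁻¹ • S (n + 1) := by
      rw [show a (n + 1) = ((n : ℂ) + 1)⁻¹ • S (n + 1) by simp [a]]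
      rw [smul_smul]
      congr 1
      field_simp
    rw [h1, hsucc]
    simp [a, smul_add]
  have hlim := (hc.smul ha1).sub ha
  rw [one_smul, sub_self] at hlim
  refine Tendsto.congr' ?_ hlim
  filter_upwards [eventually_ge_atTop 1] with n hn
  exact (key n hn).symm

lemma cesaro_fix {d : ℕ} (T Tinf : MatEnd d) (hinf : IsCesaroProj T Tinf)
    (X : Matrix (Fin d) (Fin d) ℂ) : T (Tinf X) = Tinf X := by
  set S : ℕ → Matrix (Fin d) (Fin d) ℂ := fun n => ∑ k ∈ Finset.range n, (T ^ (k + 1)) X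
  set a : ℕ → Matrix (Fin d) (Fin d) ℂ := fun n => (n : ℂ)⁻¹ • S n
  have ha : Tendsto a atTop (nhds (Tinf X)) := hinf X
  have hT : Continuous T := T.continuous_of_finiteDimensional
  have h1 : Tendsto (fun n => T (a n)) atTop (nhds (T (Tinf X))) :=
    (hT.tendsto _).comp ha
  have key : ∀ n : ℕ, T (a n) = a n + (n : ℂ)⁻¹ • (T ^ (n + 1)) X - (n : ℂ)⁻¹ • T X := by
    intro n
    have hTa : T (a n) = (n : ℂ)⁻¹ • ∑ k ∈ Finset.range n, (T ^ (k + 2)) X := by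
      simp only [a, S, _root_.map_smul, map_sum]
      congr 1
      refine Finset.sum_congr rfl fun k _ => ?_
      rw [show T ^ (k + 2) = T * T ^ (k + 1) from pow_succ' T (k + 1)]
      rfl
    have h2 : S (n + 1) = ∑ k ∈ Finset.range n, (T ^ (k + 2)) X + T X := by
      simpa using Finset.sum_range_succ' (fun k => (T ^ (k + 1)) X) n
    have h3 : S (n + 1) = S n + (T ^ (n + 1)) X := Finset.sum_range_succ _ _
    have h4 : ∑ k ∈ Finset.range n, (T ^ (k + 2)) X = S n + (T ^ (n + 1)) X - T X :=
      eq_sub_of_add_eq (h2.symm.trans h3)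
    rw [hTa, h4, smul_sub, smul_add]
  have h2 : Tendsto (fun n => a n + (n : ℂ)⁻¹ • (T ^ (n + 1)) X - (n : ℂ)⁻¹ • T X)
      atTop (nhds (Tinf X)) := by
    have hp := cesaro_pow_div T Tinf hinf X
    have hq : Tendsto (fun n : ℕ => (n : ℂ)⁻¹ • T X) atTop (nhds 0) := by
      simpa using inv_natCast_tendsto.smul (tendsto_const_nhds (x := T X))
    simpa using (ha.add hp).sub hq
  exact tendsto_nhds_unique (h1.congr key) h2

lemma cesaro_idem {d : ℕ} (T Tinf : MatEnd d) (hinf : IsCesaroProj T Tinf)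
    (X : Matrix (Fin d) (Fin d) ℂ) : Tinf (Tinf X) = Tinf X := by
  have hfix : ∀ k : ℕ, (T ^ (k + 1)) (Tinf X) = Tinf X := by
    intro k
    induction k with
    | zero => simpa using cesaro_fix T Tinf hinf X
    | succ k ih =>
      rw [pow_succ', Module.End.mul_apply, ih]
      exact cesaro_fix T Tinf hinf X
  have h1 : Tendsto (fun n : ℕ => (n : ℂ)⁻¹ • ∑ k ∈ Finset.range n, (T ^ (k + 1)) (Tinf X))
      atTop (nhds (Tinf X)) := by
    apply Tendsto.congr' ?_ (tendsto_const_nhds (x := Tinf X))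
    filter_upwards [eventually_ge_atTop 1] with n hn
    have hn' : (n : ℂ) ≠ 0 := Nat.cast_ne_zero.2 (by omega)
    rw [Finset.sum_congr rfl (fun k _ => hfix k), Finset.sum_const, Finset.card_range,
      ← Nat.cast_smul_eq_nsmul ℂ, smul_smul, inv_mul_cancel₀ hn', one_smul]
  exact tendsto_nhds_unique (hinf (Tinf X)) h1

/-- the fundamental identity `ρ₁ − ρ₂ = Z(T₁)((T₁ − T₂)(ρ₂))`. -/
theorem fixed_point_identity {d : ℕ} (T₁ T₂ Tinf Z : MatEnd d)
    (h₁TP : IsTP T₁) (h₁Pos : IsPos T₁) (h₂TP : IsTP T₂) (h₂Pos : IsPos T₂)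
    (hinf : IsCesaroProj T₁ Tinf)
    (hZ₁ : Z * (1 - (T₁ - Tinf)) = 1) (hZ₂ : (1 - (T₁ - Tinf)) * Z = 1)
    (ρ₂ : Matrix (Fin d) (Fin d) ℂ) (hρ₂ : IsDensity ρ₂) (hfix₂ : T₂ ρ₂ = ρ₂) :
    Tinf ρ₂ - ρ₂ = Z ((T₁ - T₂) ρ₂) := by
  have hfix₁ : T₁ (Tinf ρ₂) = Tinf ρ₂ := cesaro_fix T₁ Tinf hinf ρ₂
  have hidem : Tinf (Tinf ρ₂) = Tinf ρ₂ := cesaro_idem T₁ Tinf hinf ρ₂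
  have h := congrArg (fun f : MatEnd d => f (Tinf ρ₂ - ρ₂)) hZ₁
  simp only [Module.End.mul_apply, Module.End.one_apply, LinearMap.sub_apply] at h
  rw [← h]
  congr 1
  simp only [map_sub, LinearMap.sub_apply, hfix₁, hidem, hfix₂]
  abel
end

section
/- Let T, E be positive trace-preserving linear maps on M_d(ℂ), ρ₀, σ₀ density matrices, ρ_n = Tⁿ(ρ₀), σ_n = Eⁿ(σ₀). Then ‖ρ_n − σ_n‖₁ ≤ τ(Tⁿ)·‖ρ₀ − σ₀‖₁ + ‖E − T‖_{1→1} · Σ_{i=0}^{n−1} τ(Tⁱ). -/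
open Matrix Filter
open scoped ComplexOrder

namespace TN
variable {d : ℕ}

lemma trace_eq_sum_eig {A : Matrix (Fin d) (Fin d) ℂ} (hA : A.IsHermitian) :
    A.trace = (↑(∑ i, hA.eigenvalues i) : ℂ) := by
  conv_lhs => rw [hA.spectral_theorem, Unitary.conjStarAlgAut_apply]
  rw [Matrix.trace_mul_cycle, Matrix.UnitaryGroup.star_mul_self, one_mul, Matrix.trace_diagonal]
  push_cast
  rfl

lemma unitary_conj_mul {U A B : Matrix (Fin d) (Fin d) ℂ} (hU : star U * U = 1) :
    (U * A * star U) * (U * B * star U) = U * (A * B) * star U := by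
  have key : ∀ X : Matrix (Fin d) (Fin d) ℂ, star U * (U * X) = X := fun X => by
    rw [← Matrix.mul_assoc, hU, one_mul]
  simp only [Matrix.mul_assoc, key]

lemma trace_sq_eq_sum_eig {A : Matrix (Fin d) (Fin d) ℂ} (hA : A.IsHermitian) :
    (A * A).trace = (↑(∑ i, (hA.eigenvalues i)^2) : ℂ) := by
  have hU := Matrix.UnitaryGroup.star_mul_self hA.eigenvectorUnitary
  conv_lhs => rw [hA.spectral_theorem, Unitary.conjStarAlgAut_apply, unitary_conj_mul hU]
  rw [Matrix.trace_mul_cycle, hU, one_mul, Matrix.diagonal_mul_diagonal, Matrix.trace_diagonal]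
  push_cast
  simp [sq]

lemma traceNorm_eq (X : Matrix (Fin d) (Fin d) ℂ) :
    traceNorm X = ∑ i, √((Matrix.posSemidef_conjTranspose_mul_self X).1.eigenvalues i) := by
  rw [traceNorm, Matrix.trace_mul_cycle, Matrix.UnitaryGroup.star_mul_self, one_mul,
    Matrix.trace_diagonal]
  simp

lemma traceNorm_nonneg (X : Matrix (Fin d) (Fin d) ℂ) : 0 ≤ traceNorm X := by
  rw [traceNorm_eq]
  exact Finset.sum_nonneg fun i _ => Real.sqrt_nonneg _

lemma sum_sq_eig_eq (X : Matrix (Fin d) (Fin d) ℂ) :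
    ∑ i, √((Matrix.posSemidef_conjTranspose_mul_self X).1.eigenvalues i) ^ 2
      = ∑ i, ∑ j, Complex.normSq (X i j) := by
  have h1 := trace_eq_sum_eig (Matrix.posSemidef_conjTranspose_mul_self X).1
  rw [Finset.sum_congr rfl fun i _ =>
    Real.sq_sqrt ((Matrix.posSemidef_conjTranspose_mul_self X).eigenvalues_nonneg i)]
  have h2 : (Xᴴ * X).trace = (↑(∑ i, ∑ j, Complex.normSq (X i j)) : ℂ) := by
    rw [Matrix.trace]
    push_cast
    rw [Finset.sum_comm]
    refine Finset.sum_congr rfl fun j _ => ?_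
    simp only [Matrix.diag_apply, Matrix.mul_apply, Matrix.conjTranspose_apply]
    refine Finset.sum_congr rfl fun i _ => ?_
    rw [Complex.normSq_eq_conj_mul_self]; rfl
  rw [h2] at h1
  exact_mod_cast h1.symm

lemma normSq_sum_le (X : Matrix (Fin d) (Fin d) ℂ) :
    ∑ i, ∑ j, Complex.normSq (X i j) ≤ traceNorm X ^ 2 := by
  rw [← sum_sq_eig_eq, traceNorm_eq]
  set v := fun i => √((Matrix.posSemidef_conjTranspose_mul_self X).1.eigenvalues i) with hv
  have hnn : ∀ i, 0 ≤ v i := fun i => Real.sqrt_nonneg _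
  calc ∑ i, v i ^ 2 ≤ ∑ i, v i * ∑ j, v j := by
        refine Finset.sum_le_sum fun i _ => ?_
        rw [sq]
        exact mul_le_mul_of_nonneg_left
          (Finset.single_le_sum (fun j _ => hnn j) (Finset.mem_univ i)) (hnn i)
    _ = (∑ i, v i) ^ 2 := by rw [← Finset.sum_mul, sq]

lemma sq_traceNorm_le (X : Matrix (Fin d) (Fin d) ℂ) :
    traceNorm X ^ 2 ≤ d * ∑ i, ∑ j, Complex.normSq (X i j) := by
  rw [← sum_sq_eig_eq, traceNorm_eq]
  have := sq_sum_le_card_mul_sum_sq (s := (Finset.univ : Finset (Fin d)))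
    (f := fun i => √((Matrix.posSemidef_conjTranspose_mul_self X).1.eigenvalues i))
  simpa using this

lemma traceNorm_zero : traceNorm (0 : Matrix (Fin d) (Fin d) ℂ) = 0 := by
  have h1 := sq_traceNorm_le (0 : Matrix (Fin d) (Fin d) ℂ)
  have h2 := traceNorm_nonneg (0 : Matrix (Fin d) (Fin d) ℂ)
  simp only [Matrix.zero_apply, map_zero, Finset.sum_const_zero, mul_zero] at h1
  nlinarith

lemma traceNorm_pos {X : Matrix (Fin d) (Fin d) ℂ} (hX : X ≠ 0) : 0 < traceNorm X := by
  rcases (traceNorm_nonneg X).lt_or_eq with h | h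
  · exact h
  · exfalso
    apply hX
    have h1 := normSq_sum_le X
    rw [← h] at h1
    ext i j
    have hz : ∀ i ∈ Finset.univ, ∀ j ∈ (Finset.univ : Finset (Fin d)),
        Complex.normSq (X i j) = 0 := by
      have := fun i (_ : i ∈ (Finset.univ : Finset (Fin d))) =>
        Finset.sum_nonneg fun j (_ : j ∈ (Finset.univ : Finset (Fin d))) =>
          Complex.normSq_nonneg (X i j)
      intro i hi j hj
      have h3 : ∑ i, ∑ j, Complex.normSq (X i j) = 0 :=
        le_antisymm (by simpa using h1) (Finset.sum_nonneg this)
      have h4 := (Finset.sum_eq_zero_iff_of_nonneg this).mp h3 i hi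
      exact (Finset.sum_eq_zero_iff_of_nonneg
        (fun j _ => Complex.normSq_nonneg (X i j))).mp h4 j hj
    simpa [Complex.normSq_eq_zero] using hz i (Finset.mem_univ i) j (Finset.mem_univ j)

lemma sqrt_congr {A B : Matrix (Fin d) (Fin d) ℂ} (hA : A.IsHermitian) (hB : B.IsHermitian)
    (h : A = B) : ∑ i, √(hA.eigenvalues i) = ∑ i, √(hB.eigenvalues i) := by subst h; rfl

lemma traceNorm_neg (X : Matrix (Fin d) (Fin d) ℂ) : traceNorm (-X) = traceNorm X := by
  rw [traceNorm_eq, traceNorm_eq, sqrt_congr (Matrix.posSemidef_conjTranspose_mul_self (-X)).1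
    (Matrix.posSemidef_conjTranspose_mul_self X).1 (by simp)]

lemma entry_le_traceNorm (X : Matrix (Fin d) (Fin d) ℂ) (i j : Fin d) :
    ‖X i j‖ ≤ traceNorm X := by
  have h1 : Complex.normSq (X i j) ≤ traceNorm X ^ 2 := by
    refine le_trans ?_ (normSq_sum_le X)
    calc Complex.normSq (X i j) ≤ ∑ j', Complex.normSq (X i j') :=
          Finset.single_le_sum (fun j' _ => Complex.normSq_nonneg _) (Finset.mem_univ j)
      _ ≤ ∑ i', ∑ j', Complex.normSq (X i' j') :=
          Finset.single_le_sum (fun i' _ => Finset.sum_nonneg fun j' _ =>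
            Complex.normSq_nonneg _) (Finset.mem_univ i)
  have h2 : ‖X i j‖ ^ 2 ≤ traceNorm X ^ 2 := by
    rwa [← Complex.sq_norm] at h1
  exact (pow_le_pow_iff_left₀ (norm_nonneg _) (traceNorm_nonneg X) two_ne_zero).mp h2

lemma exists_opBound (L : MatEnd d) :
    ∃ C : ℝ, 0 ≤ C ∧ ∀ X, traceNorm (L X) ≤ C * traceNorm X := by
  classical
  set c : Fin d → Fin d → ℝ := fun i j =>
    ∑ p : Fin d × Fin d, ‖(L (Matrix.single p.1 p.2 1)) i j‖ with hc
  refine ⟨Real.sqrt (d * ∑ i, ∑ j, (c i j)^2), Real.sqrt_nonneg _, fun X => ?_⟩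
  have hentry : ∀ i j, ‖(L X) i j‖ ≤ traceNorm X * c i j := by
    intro i j
    have hX : X = ∑ p : Fin d × Fin d, X p.1 p.2 • Matrix.single p.1 p.2 1 := by
      conv_lhs => rw [Matrix.matrix_eq_sum_single X]
      rw [← Finset.sum_product']
      refine Finset.sum_congr rfl fun p _ => ?_
      rw [Matrix.smul_single, smul_eq_mul, mul_one]
    calc ‖(L X) i j‖ = ‖∑ p : Fin d × Fin d, X p.1 p.2 * (L (Matrix.single p.1 p.2 1)) i j‖ := by
          conv_lhs => rw [hX]
          rw [map_sum]
          congr 1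
          rw [Matrix.sum_apply]  -- matrix entries of sum
          refine Finset.sum_congr rfl fun p _ => ?_
          rw [_root_.map_smul]
          rfl
      _ ≤ ∑ p : Fin d × Fin d, ‖X p.1 p.2‖ * ‖(L (Matrix.single p.1 p.2 1)) i j‖ := by
          refine (norm_sum_le _ _).trans ?_
          exact Finset.sum_le_sum fun p _ => le_of_eq (norm_mul _ _)
      _ ≤ ∑ p : Fin d × Fin d, traceNorm X * ‖(L (Matrix.single p.1 p.2 1)) i j‖ := by
          refine Finset.sum_le_sum fun p _ => ?_
          exact mul_le_mul_of_nonneg_right (entry_le_traceNorm X p.1 p.2) (norm_nonneg _)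
      _ = traceNorm X * c i j := by rw [← Finset.mul_sum]
  have hcnn : ∀ i j, 0 ≤ c i j := fun i j =>
    Finset.sum_nonneg fun p _ => norm_nonneg _
  have hsq : traceNorm (L X) ^ 2 ≤ (d * ∑ i, ∑ j, (c i j)^2) * traceNorm X ^ 2 := by
    calc traceNorm (L X) ^ 2 ≤ d * ∑ i, ∑ j, Complex.normSq ((L X) i j) := sq_traceNorm_le _
      _ ≤ d * ∑ i, ∑ j, (traceNorm X * c i j)^2 := by
          refine mul_le_mul_of_nonneg_left (Finset.sum_le_sum fun i _ =>
            Finset.sum_le_sum fun j _ => ?_) (Nat.cast_nonneg d)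
          rw [Complex.normSq_eq_norm_sq]
          exact pow_le_pow_left₀ (norm_nonneg _) (hentry i j) 2
      _ = (d * ∑ i, ∑ j, (c i j)^2) * traceNorm X ^ 2 := by
          simp_rw [mul_pow, ← Finset.mul_sum]
          ring
  have h0 := traceNorm_nonneg (L X)
  have h0' := traceNorm_nonneg X
  have key : traceNorm (L X) ≤ Real.sqrt (d * ∑ i, ∑ j, (c i j)^2) * traceNorm X := by
    have hKnn : 0 ≤ (d : ℝ) * ∑ i, ∑ j, (c i j)^2 := by
      refine mul_nonneg (Nat.cast_nonneg d) (Finset.sum_nonneg fun i _ =>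
        Finset.sum_nonneg fun j _ => sq_nonneg _)
    have : (Real.sqrt (d * ∑ i, ∑ j, (c i j)^2) * traceNorm X) ^ 2
        = (d * ∑ i, ∑ j, (c i j)^2) * traceNorm X ^ 2 := by
      rw [mul_pow, Real.sq_sqrt hKnn]
    refine (pow_le_pow_iff_left₀ h0 (mul_nonneg (Real.sqrt_nonneg _) h0') two_ne_zero).mp ?_
    rw [this]; exact hsq
  exact key

lemma herm_traceNorm {A : Matrix (Fin d) (Fin d) ℂ} (hA : A.IsHermitian) :
    traceNorm A = ∑ i, |hA.eigenvalues i| := by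
  have hcfc : traceNorm A = (cfc Real.sqrt (Aᴴ * A)).trace.re := by
    rw [(Matrix.posSemidef_conjTranspose_mul_self A).1.cfc_eq, Matrix.IsHermitian.cfc,
      Unitary.conjStarAlgAut_apply]
    rfl
  have hsq : Aᴴ * A = cfc (fun x : ℝ => x ^ 2) A := by
    rw [cfc_pow_id A 2 hA.isSelfAdjoint, hA.eq, sq]
  have hU : star (hA.eigenvectorUnitary : Matrix (Fin d) (Fin d) ℂ) *
      (hA.eigenvectorUnitary : Matrix (Fin d) (Fin d) ℂ) = 1 :=
    Matrix.UnitaryGroup.star_mul_self _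
  rw [hcfc, hsq, ← cfc_comp Real.sqrt (fun x : ℝ => x ^ 2) A hA.isSelfAdjoint,
    cfc_congr (f := Real.sqrt ∘ fun x : ℝ => x ^ 2) (g := fun x : ℝ => |x|) (fun x _ => Real.sqrt_sq_eq_abs x), hA.cfc_eq,
    Matrix.IsHermitian.cfc, Unitary.conjStarAlgAut_apply, Matrix.trace_mul_cycle, hU, one_mul,
    Matrix.trace_diagonal]
  simp [Complex.re_sum]

lemma key_bound {U V : Matrix (Fin d) (Fin d) ℂ}
    (hU : U ∈ Matrix.unitaryGroup (Fin d) ℂ) (hV : V ∈ Matrix.unitaryGroup (Fin d) ℂ)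
    (s μ : Fin d → ℝ) (hs : ∀ i, |s i| ≤ 1) :
    (((U * Matrix.diagonal (Complex.ofReal ∘ s) * star U) *
      (V * Matrix.diagonal (Complex.ofReal ∘ μ) * star V)).trace).re ≤ ∑ j, |μ j| := by
  set W : Matrix (Fin d) (Fin d) ℂ := star U * V with hW
  have hWW : star W * W = 1 := by
    rw [hW, StarMul.star_mul, star_star, Matrix.mul_assoc, ← Matrix.mul_assoc U,
      (Matrix.mem_unitaryGroup_iff).mp hU, one_mul,
      (Matrix.mem_unitaryGroup_iff').mp hV]
  have htr : ((U * Matrix.diagonal (Complex.ofReal ∘ s) * star U) *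
      (V * Matrix.diagonal (Complex.ofReal ∘ μ) * star V)).trace
      = (Matrix.diagonal (Complex.ofReal ∘ s) * (W * Matrix.diagonal (Complex.ofReal ∘ μ) * star W)).trace := by
    rw [show (U * Matrix.diagonal (Complex.ofReal ∘ s) * star U) * (V * Matrix.diagonal (Complex.ofReal ∘ μ) * star V)
      = (U * Matrix.diagonal (Complex.ofReal ∘ s)) * ((star U * V) * Matrix.diagonal (Complex.ofReal ∘ μ) * star V)
      from by simp only [Matrix.mul_assoc]]
    rw [Matrix.trace_mul_comm]
    rw [show ((star U * V) * Matrix.diagonal (Complex.ofReal ∘ μ) * star V) * (U * Matrix.diagonal (Complex.ofReal ∘ s))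
      = (W * Matrix.diagonal (Complex.ofReal ∘ μ) * star W) * Matrix.diagonal (Complex.ofReal ∘ s)
      from by rw [hW, StarMul.star_mul, star_star]; simp only [Matrix.mul_assoc]]
    rw [Matrix.trace_mul_comm]
  rw [htr]
  have hdiag : ∀ i, (Matrix.diagonal (Complex.ofReal ∘ s) * (W * Matrix.diagonal (Complex.ofReal ∘ μ) * star W)) i i
      = ∑ j, ((s i * μ j * Complex.normSq (W i j) : ℝ) : ℂ) := by
    intro i
    rw [Matrix.diagonal_mul, Matrix.mul_apply, Finset.mul_sum]
    refine Finset.sum_congr rfl fun j _ => ?_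
    rw [Matrix.mul_diagonal, Matrix.star_eq_conjTranspose, Matrix.conjTranspose_apply,
      Function.comp_apply, Function.comp_apply,
      show (W i j * (μ j : ℂ)) * star (W i j) = (μ j : ℂ) * (W i j * star (W i j)) from by ring,
      show star (W i j) = (starRingEnd ℂ) (W i j) from rfl, Complex.mul_conj]
    push_cast
    ring
  have hcol : ∀ j, ∑ i, Complex.normSq (W i j) = 1 := by
    intro j
    have h1 : (star W * W) j j = 1 := by rw [hWW]; simp [Matrix.one_apply]
    rw [Matrix.mul_apply] at h1
    have h2 : ∑ i, ((Complex.normSq (W i j) : ℝ) : ℂ) = 1 := by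
      refine Eq.trans ?_ h1
      refine Finset.sum_congr rfl fun i _ => ?_
      rw [Matrix.star_eq_conjTranspose, Matrix.conjTranspose_apply,
        show star (W i j) = (starRingEnd ℂ) (W i j) from rfl]
      rw [mul_comm, Complex.mul_conj]
    exact_mod_cast h2
  have hre : ((Matrix.diagonal (Complex.ofReal ∘ s) * (W * Matrix.diagonal (Complex.ofReal ∘ μ) * star W)).trace).re
      = ∑ i, ∑ j, s i * μ j * Complex.normSq (W i j) := by
    rw [Matrix.trace, Complex.re_sum]
    refine Finset.sum_congr rfl fun i _ => ?_
    rw [Matrix.diag_apply, hdiag i, Complex.re_sum]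
    refine Finset.sum_congr rfl fun j _ => ?_
    exact Complex.ofReal_re _
  rw [hre]
  calc ∑ i, ∑ j, s i * μ j * Complex.normSq (W i j)
      ≤ ∑ i, ∑ j, |μ j| * Complex.normSq (W i j) * (if True then 1 else 1) := by
        simp only [if_true, mul_one]
        refine Finset.sum_le_sum fun i _ => Finset.sum_le_sum fun j _ => ?_
        refine mul_le_mul_of_nonneg_right ?_ (Complex.normSq_nonneg _)
        refine le_trans (le_abs_self _) ?_
        rw [abs_mul]
        calc |s i| * |μ j| ≤ 1 * |μ j| :=
              mul_le_mul_of_nonneg_right (hs i) (abs_nonneg _)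
          _ = |μ j| := one_mul _
    _ = ∑ j, |μ j| := by
        simp only [if_true, mul_one]
        rw [Finset.sum_comm]
        refine Finset.sum_congr rfl fun j _ => ?_
        rw [← Finset.mul_sum, hcol j, mul_one]

lemma traceNorm_add_le {A B : Matrix (Fin d) (Fin d) ℂ}
    (hA : A.IsHermitian) (hB : B.IsHermitian) :
    traceNorm (A + B) ≤ traceNorm A + traceNorm B := by
  have hC : (A + B).IsHermitian := hA.add hB
  have hU : star (hC.eigenvectorUnitary : Matrix (Fin d) (Fin d) ℂ) *
      (hC.eigenvectorUnitary : Matrix (Fin d) (Fin d) ℂ) = 1 :=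
    Matrix.UnitaryGroup.star_mul_self _
  set s : Fin d → ℝ := fun i => if hC.eigenvalues i < 0 then -1 else 1 with hsdef
  have hs : ∀ i, |s i| ≤ 1 := by
    intro i; by_cases h : hC.eigenvalues i < 0 <;> simp [hsdef, h]
  set C : Matrix (Fin d) (Fin d) ℂ :=
    (hC.eigenvectorUnitary : Matrix (Fin d) (Fin d) ℂ) * Matrix.diagonal (Complex.ofReal ∘ s) *
      star (hC.eigenvectorUnitary : Matrix (Fin d) (Fin d) ℂ) with hCdef
  have h1 : traceNorm (A + B) = ((C * (A + B)).trace).re := by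
    rw [herm_traceNorm hC]
    conv_rhs => rw [hC.spectral_theorem, Unitary.conjStarAlgAut_apply, hCdef, unitary_conj_mul hU,
      Matrix.diagonal_mul_diagonal, Matrix.trace_mul_cycle, hU, one_mul, Matrix.trace_diagonal]
    rw [Complex.re_sum]
    refine Finset.sum_congr rfl fun i _ => ?_
    simp only [Pi.mul_apply, Function.comp_apply]
    rw [show ((Complex.ofReal (s i)) * (RCLike.ofReal (hC.eigenvalues i)) : ℂ)
        = ((s i * hC.eigenvalues i : ℝ) : ℂ) from by push_cast; rfl, Complex.ofReal_re]
    by_cases h : hC.eigenvalues i < 0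
    · simp [hsdef, h, abs_of_neg h]
    · simp [hsdef, h, abs_of_nonneg (not_lt.mp h)]
  have h2 : ((C * A).trace).re ≤ traceNorm A := by
    rw [herm_traceNorm hA]
    conv_lhs => rw [hA.spectral_theorem, Unitary.conjStarAlgAut_apply]
    exact key_bound hC.eigenvectorUnitary.2 hA.eigenvectorUnitary.2 s hA.eigenvalues hs
  have h3 : ((C * B).trace).re ≤ traceNorm B := by
    rw [herm_traceNorm hB]
    conv_lhs => rw [hB.spectral_theorem, Unitary.conjStarAlgAut_apply]
    exact key_bound hC.eigenvectorUnitary.2 hB.eigenvectorUnitary.2 s hB.eigenvalues hs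
  have h4 : ((C * (A + B)).trace).re = ((C * A).trace).re + ((C * B).trace).re := by
    rw [mul_add, Matrix.trace_add, Complex.add_re]
  rw [h1, h4]
  exact add_le_add h2 h3

lemma traceNorm_psd {A : Matrix (Fin d) (Fin d) ℂ} (hA : A.PosSemidef) :
    traceNorm A = A.trace.re := by
  rw [herm_traceNorm hA.1, trace_eq_sum_eig hA.1, Complex.ofReal_re]
  exact Finset.sum_congr rfl fun i _ => abs_of_nonneg (hA.eigenvalues_nonneg i)

lemma traceNorm_density {ρ : Matrix (Fin d) (Fin d) ℂ} (hρ : IsDensity ρ) :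
    traceNorm ρ = 1 := by
  rw [traceNorm_psd hρ.1, hρ.2]; rfl

lemma herm_decomp {A : Matrix (Fin d) (Fin d) ℂ} (hA : A.IsHermitian) :
    ∃ P N : Matrix (Fin d) (Fin d) ℂ, P.PosSemidef ∧ N.PosSemidef ∧ A = P - N := by
  refine ⟨(hA.eigenvectorUnitary : Matrix (Fin d) (Fin d) ℂ) *
      Matrix.diagonal (Complex.ofReal ∘ fun i => max (hA.eigenvalues i) 0) *
      (hA.eigenvectorUnitary : Matrix (Fin d) (Fin d) ℂ)ᴴ,
    (hA.eigenvectorUnitary : Matrix (Fin d) (Fin d) ℂ) *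
      Matrix.diagonal (Complex.ofReal ∘ fun i => max (-hA.eigenvalues i) 0) *
      (hA.eigenvectorUnitary : Matrix (Fin d) (Fin d) ℂ)ᴴ, ?_, ?_, ?_⟩
  · exact Matrix.PosSemidef.mul_mul_conjTranspose_same
      (Matrix.posSemidef_diagonal_iff.mpr fun i =>
        Complex.zero_le_real.mpr (le_max_right _ _)) _
  · exact Matrix.PosSemidef.mul_mul_conjTranspose_same
      (Matrix.posSemidef_diagonal_iff.mpr fun i =>
        Complex.zero_le_real.mpr (le_max_right _ _)) _
  · rw [← Matrix.star_eq_conjTranspose, ← Matrix.sub_mul, ← Matrix.mul_sub]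
    have hd : Matrix.diagonal (Complex.ofReal ∘ fun i => max (hA.eigenvalues i) 0) -
        Matrix.diagonal (Complex.ofReal ∘ fun i => max (-hA.eigenvalues i) 0)
        = Matrix.diagonal (RCLike.ofReal ∘ hA.eigenvalues) := by
      rw [Matrix.diagonal_sub]
      refine congrArg Matrix.diagonal (funext fun i => ?_)
      simp only [Pi.sub_apply, Function.comp_apply]
      have h2 : max (hA.eigenvalues i) 0 - max (-hA.eigenvalues i) 0 = hA.eigenvalues i := by
        rcases le_or_gt 0 (hA.eigenvalues i) with h | h
        · rw [max_eq_left h, max_eq_right (neg_nonpos.mpr h)]; ring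
        · rw [max_eq_right h.le, max_eq_left (neg_nonneg.mpr h.le)]; ring
      rw [← Complex.ofReal_sub, h2]
      rfl
    rw [hd]
    exact hA.spectral_theorem

lemma herm_preserve {T : MatEnd d} (hT : IsPos T) {A : Matrix (Fin d) (Fin d) ℂ}
    (hA : A.IsHermitian) : (T A).IsHermitian := by
  obtain ⟨P, N, hP, hN, rfl⟩ := herm_decomp hA
  rw [map_sub]
  exact (hT P hP).1.sub (hT N hN).1

lemma tau_bddAbove (L : MatEnd d) : BddAbove {r | ∃ σ : Matrix (Fin d) (Fin d) ℂ,
    σ.IsHermitian ∧ σ.trace = 0 ∧ σ ≠ 0 ∧ r = traceNorm (L σ) / traceNorm σ} := by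
  obtain ⟨C, hC0, hC⟩ := exists_opBound L
  refine ⟨C, fun r hr => ?_⟩
  obtain ⟨σ, _, _, hσ, rfl⟩ := hr
  rw [div_le_iff₀ (traceNorm_pos hσ)]
  exact hC σ

lemma tau_nonneg (L : MatEnd d) : 0 ≤ tau L := by
  refine Real.sSup_nonneg fun r hr => ?_
  obtain ⟨σ, _, _, hσ, rfl⟩ := hr
  exact div_nonneg (traceNorm_nonneg _) (traceNorm_nonneg _)

lemma tau_apply_le (L : MatEnd d) {σ : Matrix (Fin d) (Fin d) ℂ}
    (hher : σ.IsHermitian) (htr : σ.trace = 0) :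
    traceNorm (L σ) ≤ tau L * traceNorm σ := by
  by_cases hσ : σ = 0
  · subst hσ
    simp [traceNorm_zero]
  · have h1 : traceNorm (L σ) / traceNorm σ ≤ tau L :=
      le_csSup (tau_bddAbove L) ⟨σ, hher, htr, hσ, rfl⟩
    rwa [div_le_iff₀ (traceNorm_pos hσ)] at h1

lemma norm1to1_nonneg (L : MatEnd d) : 0 ≤ norm1to1 L := by
  refine Real.sSup_nonneg fun r hr => ?_
  obtain ⟨X, hX, rfl⟩ := hr
  exact div_nonneg (traceNorm_nonneg _) (traceNorm_nonneg _)

lemma norm1to1_apply_le (L : MatEnd d) (X : Matrix (Fin d) (Fin d) ℂ) :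
    traceNorm (L X) ≤ norm1to1 L * traceNorm X := by
  obtain ⟨C, hC0, hC⟩ := exists_opBound L
  by_cases hX : X = 0
  · subst hX
    simp [traceNorm_zero]
  · have hbdd : BddAbove {r | ∃ X, X ≠ 0 ∧ r = traceNorm (L X) / traceNorm X} := by
      refine ⟨C, fun r hr => ?_⟩
      obtain ⟨Y, hY, rfl⟩ := hr
      rw [div_le_iff₀ (traceNorm_pos hY)]
      exact hC Y
    have h1 : traceNorm (L X) / traceNorm X ≤ norm1to1 L :=
      le_csSup hbdd ⟨X, hX, rfl⟩
    rwa [div_le_iff₀ (traceNorm_pos hX)] at h1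

lemma traceNorm_sum_le {ι : Type*} (s : Finset ι) (f : ι → Matrix (Fin d) (Fin d) ℂ)
    (hf : ∀ i ∈ s, (f i).IsHermitian) :
    traceNorm (∑ i ∈ s, f i) ≤ ∑ i ∈ s, traceNorm (f i) ∧ (∑ i ∈ s, f i).IsHermitian := by
  classical
  induction s using Finset.induction_on with
  | empty => simp [traceNorm_zero, Matrix.isHermitian_zero]
  | insert a t hx ih =>
    have hft : ∀ i ∈ t, (f i).IsHermitian := fun i hi => hf i (Finset.mem_insert_of_mem hi)
    obtain ⟨ih1, ih2⟩ := ih hft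
    have ha : (f a).IsHermitian := hf a (Finset.mem_insert_self a t)
    rw [Finset.sum_insert hx, Finset.sum_insert hx]
    constructor
    · exact (traceNorm_add_le ha ih2).trans (add_le_add_right ih1 _)
    · exact ha.add ih2

lemma pos_pow {T : MatEnd d} (hT : IsPos T) (n : ℕ) : IsPos (T ^ n) := by
  induction n with
  | zero => intro X hX; simpa using hX
  | succ n ih =>
    intro X hX
    rw [pow_succ, Module.End.mul_apply]
    exact ih _ (hT X hX)

lemma tp_pow {T : MatEnd d} (hT : IsTP T) (n : ℕ) : IsTP (T ^ n) := by
  induction n with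
  | zero => intro X; simp
  | succ n ih =>
    intro X
    rw [pow_succ, Module.End.mul_apply, ih, hT]

lemma telescope (T E : MatEnd d) (n : ℕ) :
    T ^ n - E ^ n = ∑ i ∈ Finset.range n, T ^ (n - 1 - i) * (T - E) * E ^ i := by
  induction n with
  | zero => simp
  | succ n ih =>
    rw [Finset.sum_range_succ]
    have hlast : T ^ (n + 1 - 1 - n) * (T - E) * E ^ n = (T - E) * E ^ n := by
      simp
    rw [hlast]
    have hstep : ∑ i ∈ Finset.range n, T ^ (n + 1 - 1 - i) * (T - E) * E ^ i
        = T * ∑ i ∈ Finset.range n, T ^ (n - 1 - i) * (T - E) * E ^ i := by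
      rw [Finset.mul_sum]
      refine Finset.sum_congr rfl fun i hi => ?_
      have hi' : i < n := Finset.mem_range.mp hi
      have : n + 1 - 1 - i = (n - 1 - i) + 1 := by omega
      simp only [this, pow_succ', mul_assoc]
    rw [hstep, ← ih, mul_sub, ← pow_succ', sub_mul, ← pow_succ', sub_add_sub_cancel]

end TN

open TN in
/-- finite-time perturbation bound in terms of contraction coefficients. -/
theorem finite_time_bound {d : ℕ} (T E : MatEnd d)
    (hTTP : IsTP T) (hTPos : IsPos T) (hETP : IsTP E) (hEPos : IsPos E)
    (ρ₀ σ₀ : Matrix (Fin d) (Fin d) ℂ) (hρ₀ : IsDensity ρ₀) (hσ₀ : IsDensity σ₀) :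
    ∀ n : ℕ, traceNorm ((T ^ n) ρ₀ - (E ^ n) σ₀) ≤
      tau (T ^ n) * traceNorm (ρ₀ - σ₀) +
        norm1to1 (E - T) * ∑ i ∈ Finset.range n, tau (T ^ i) := by
  intro n
  have h1 : (T ^ n) σ₀ - (E ^ n) σ₀
      = ∑ i ∈ Finset.range n, (T ^ (n - 1 - i)) ((T - E) ((E ^ i) σ₀)) := by
    conv_lhs => rw [show (T ^ n) σ₀ - (E ^ n) σ₀ = (T ^ n - E ^ n) σ₀ from
      (LinearMap.sub_apply _ _ _).symm, telescope T E n]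
    rw [LinearMap.sum_apply]
    refine Finset.sum_congr rfl fun i _ => ?_
    rw [Module.End.mul_apply, Module.End.mul_apply]
  have hdec : (T ^ n) ρ₀ - (E ^ n) σ₀
      = (T ^ n) (ρ₀ - σ₀) + ∑ i ∈ Finset.range n, (T ^ (n - 1 - i)) ((T - E) ((E ^ i) σ₀)) := by
    rw [← h1, map_sub]
    abel
  have hdens : ∀ i : ℕ, IsDensity ((E ^ i) σ₀) := fun i =>
    ⟨pos_pow hEPos i σ₀ hσ₀.1, (tp_pow hETP i σ₀).trans hσ₀.2⟩
  have hxherm : ∀ i : ℕ, ((E ^ i) σ₀).IsHermitian := fun i => (hdens i).1.1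
  have hyherm : ∀ i : ℕ, ((T - E) ((E ^ i) σ₀)).IsHermitian := by
    intro i
    rw [LinearMap.sub_apply]
    exact (herm_preserve hTPos (hxherm i)).sub (herm_preserve hEPos (hxherm i))
  have hytr : ∀ i : ℕ, ((T - E) ((E ^ i) σ₀)).trace = 0 := by
    intro i
    rw [LinearMap.sub_apply, Matrix.trace_sub, hTTP, hETP, sub_self]
  have hfherm : ∀ i ∈ Finset.range n, ((T ^ (n - 1 - i)) ((T - E) ((E ^ i) σ₀))).IsHermitian :=
    fun i _ => herm_preserve (pos_pow hTPos (n - 1 - i)) (hyherm i)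
  obtain ⟨hsum_le, hsum_herm⟩ := traceNorm_sum_le (Finset.range n) _ hfherm
  have hAherm : ((T ^ n) (ρ₀ - σ₀)).IsHermitian :=
    herm_preserve (pos_pow hTPos n) (hρ₀.1.1.sub hσ₀.1.1)
  have hAbound : traceNorm ((T ^ n) (ρ₀ - σ₀)) ≤ tau (T ^ n) * traceNorm (ρ₀ - σ₀) := by
    refine tau_apply_le _ (hρ₀.1.1.sub hσ₀.1.1) ?_
    rw [Matrix.trace_sub, hρ₀.2, hσ₀.2, sub_self]
  have hterm : ∀ i ∈ Finset.range n,
      traceNorm ((T ^ (n - 1 - i)) ((T - E) ((E ^ i) σ₀)))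
        ≤ tau (T ^ (n - 1 - i)) * norm1to1 (E - T) := by
    intro i _
    refine le_trans (tau_apply_le _ (hyherm i) (hytr i)) ?_
    refine mul_le_mul_of_nonneg_left ?_ (tau_nonneg _)
    have hneg : (T - E) ((E ^ i) σ₀) = -((E - T) ((E ^ i) σ₀)) := by
      rw [LinearMap.sub_apply, LinearMap.sub_apply, neg_sub]
    rw [hneg, traceNorm_neg]
    calc traceNorm ((E - T) ((E ^ i) σ₀))
        ≤ norm1to1 (E - T) * traceNorm ((E ^ i) σ₀) := norm1to1_apply_le _ _
      _ = norm1to1 (E - T) := by rw [traceNorm_density (hdens i), mul_one]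
  calc traceNorm ((T ^ n) ρ₀ - (E ^ n) σ₀)
      ≤ traceNorm ((T ^ n) (ρ₀ - σ₀))
        + traceNorm (∑ i ∈ Finset.range n, (T ^ (n - 1 - i)) ((T - E) ((E ^ i) σ₀))) := by
        rw [hdec]
        exact traceNorm_add_le hAherm hsum_herm
    _ ≤ tau (T ^ n) * traceNorm (ρ₀ - σ₀)
        + ∑ i ∈ Finset.range n, tau (T ^ (n - 1 - i)) * norm1to1 (E - T) := by
        refine add_le_add hAbound (hsum_le.trans ?_)
        exact Finset.sum_le_sum hterm
    _ = tau (T ^ n) * traceNorm (ρ₀ - σ₀)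
        + norm1to1 (E - T) * ∑ i ∈ Finset.range n, tau (T ^ i) := by
        congr 1
        rw [Finset.sum_range_reflect (fun j => tau (T ^ j) * norm1to1 (E - T)) n,
          ← Finset.sum_mul, mul_comm]
end

section
/- Under the hypotheses of the discrete-time perturbation theorem (T, E positive trace-preserving on M_d(ℂ), T with unique stationary state, ‖Tⁿ − T^∞‖_{1→1} ≤ K·μⁿ with K ≥ 1, 0 ≤ μ < 1, n̂ = ⌈log(1/K)/log μ⌉): limsup_{n→∞} ‖Tⁿ(ρ₀) − Eⁿ(σ₀)‖₁ ≤ (n̂ + 1/(1−μ))·‖E − T‖_{1→1} for all density matrices ρ₀, σ₀. -/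
open Matrix Filter
open scoped ComplexOrder

section Aux
variable {d : ℕ}

/-- The PSD square root appearing in `traceNorm`. -/
noncomputable def psdSqrt {A : Matrix (Fin d) (Fin d) ℂ} (hA : A.PosSemidef) :
    Matrix (Fin d) (Fin d) ℂ :=
  hA.1.eigenvectorUnitary.1 *
    diagonal (((↑) : ℝ → ℂ) ∘ (√·) ∘ hA.1.eigenvalues) *
    (star hA.1.eigenvectorUnitary : Matrix (Fin d) (Fin d) ℂ)

lemma traceNorm_eq (X : Matrix (Fin d) (Fin d) ℂ) :
    traceNorm X = (psdSqrt (Matrix.posSemidef_conjTranspose_mul_self X)).trace.re := rfl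

lemma psdSqrt_eq {A : Matrix (Fin d) (Fin d) ℂ} (hA : A.PosSemidef) :
    psdSqrt hA = (hA.1.eigenvectorUnitary : Matrix (Fin d) (Fin d) ℂ) *
      diagonal (fun i => ((√(hA.1.eigenvalues i) : ℝ) : ℂ)) *
      star (hA.1.eigenvectorUnitary : Matrix (Fin d) (Fin d) ℂ) := by
  rfl

lemma posSemidef_psdSqrt {A : Matrix (Fin d) (Fin d) ℂ} (hA : A.PosSemidef) :
    (psdSqrt hA).PosSemidef := by
  rw [psdSqrt_eq, Matrix.star_eq_conjTranspose]
  exact (Matrix.posSemidef_diagonal_iff.mpr fun i =>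
    Complex.zero_le_real.mpr (Real.sqrt_nonneg _)).mul_mul_conjTranspose_same _

lemma psdSqrt_mul_self {A : Matrix (Fin d) (Fin d) ℂ} (hA : A.PosSemidef) :
    psdSqrt hA * psdSqrt hA = A := by
  have hU : star (hA.1.eigenvectorUnitary : Matrix (Fin d) (Fin d) ℂ)
      * (hA.1.eigenvectorUnitary : Matrix (Fin d) (Fin d) ℂ) = 1 :=
    Matrix.mem_unitaryGroup_iff'.mp hA.1.eigenvectorUnitary.2
  conv_rhs => rw [hA.1.spectral_theorem]
  rw [Unitary.conjStarAlgAut_apply, psdSqrt_eq]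
  simp only [Matrix.mul_assoc]
  rw [← Matrix.mul_assoc (star _) _ (diagonal _ * _), hU, Matrix.one_mul,
    ← Matrix.mul_assoc (diagonal _) (diagonal _), Matrix.diagonal_mul_diagonal]
  congr 3
  funext i
  rw [Function.comp_apply, ← Complex.ofReal_mul, Real.mul_self_sqrt (hA.eigenvalues_nonneg i)]
  rfl

open scoped MatrixOrder in
lemma psd_eq_sqrt_of_sq_eq {S A : Matrix (Fin d) (Fin d) ℂ} (hS : S.PosSemidef)
    (hA : A.PosSemidef) (h : S ^ 2 = A) : S = psdSqrt hA := by
  have h1 : CFC.sqrt A = S :=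
    (CFC.sqrt_eq_iff A S hA.nonneg hS.nonneg).mpr (by rw [← h, sq])
  have h2 : CFC.sqrt A = psdSqrt hA :=
    (CFC.sqrt_eq_iff A _ hA.nonneg (posSemidef_psdSqrt hA).nonneg).mpr (psdSqrt_mul_self hA)
  rw [← h1, h2]

private lemma sqrt_congr {A B : Matrix (Fin d) (Fin d) ℂ} (hA : A.PosSemidef) (hB : B.PosSemidef)
    (h : A = B) : psdSqrt hA = psdSqrt hB := by subst h; rfl

lemma traceNorm_congr {X Y : Matrix (Fin d) (Fin d) ℂ} (h : Xᴴ * X = Yᴴ * Y) :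
    traceNorm X = traceNorm Y := by
  rw [traceNorm_eq, traceNorm_eq]
  rw [sqrt_congr (Matrix.posSemidef_conjTranspose_mul_self X)
    (Matrix.posSemidef_conjTranspose_mul_self Y) h]

lemma traceNorm_neg (X : Matrix (Fin d) (Fin d) ℂ) : traceNorm (-X) = traceNorm X :=
  traceNorm_congr (by simp)

lemma traceNorm_psd {P : Matrix (Fin d) (Fin d) ℂ} (hP : P.PosSemidef) :
    traceNorm P = P.trace.re := by
  have h : P = psdSqrt (Matrix.posSemidef_conjTranspose_mul_self P) :=
    psd_eq_sqrt_of_sq_eq hP _ (by rw [hP.1.eq, pow_two])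
  rw [traceNorm_eq]
  rw [← h]

lemma traceNorm_zero : traceNorm (0 : Matrix (Fin d) (Fin d) ℂ) = 0 := by
  rw [traceNorm_psd Matrix.PosSemidef.zero]; simp

-- conjugation helpers
lemma trace_conj_diag {U : Matrix (Fin d) (Fin d) ℂ} (hU : star U * U = 1) (f : Fin d → ℂ) :
    (U * Matrix.diagonal f * star U).trace = ∑ i, f i := by
  rw [Matrix.trace_mul_cycle, hU, Matrix.one_mul, Matrix.trace_diagonal]

lemma psd_conj_diag {U : Matrix (Fin d) (Fin d) ℂ} {f : Fin d → ℝ} (hf : ∀ i, 0 ≤ f i) :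
    (U * Matrix.diagonal (fun i => (f i : ℂ)) * star U).PosSemidef := by
  rw [Matrix.star_eq_conjTranspose]
  exact (Matrix.posSemidef_diagonal_iff.mpr fun i =>
    Complex.zero_le_real.mpr (hf i)).mul_mul_conjTranspose_same U

lemma conj_diag_mul {U : Matrix (Fin d) (Fin d) ℂ} (hU : star U * U = 1) (f g : Fin d → ℂ) :
    (U * Matrix.diagonal f * star U) * (U * Matrix.diagonal g * star U)
      = U * Matrix.diagonal (fun i => f i * g i) * star U := by
  have : Matrix.diagonal f * (star U * U) * Matrix.diagonal g = Matrix.diagonal fun i => f i * g i := by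
    rw [hU, Matrix.mul_one, Matrix.diagonal_mul_diagonal]
  calc (U * Matrix.diagonal f * star U) * (U * Matrix.diagonal g * star U)
      = U * (Matrix.diagonal f * (star U * U) * Matrix.diagonal g) * star U := by
        simp only [Matrix.mul_assoc]
    _ = U * Matrix.diagonal (fun i => f i * g i) * star U := by rw [this]
end Aux

section Spectral
variable {d : ℕ}

lemma psd_diag_re_nonneg {M : Matrix (Fin d) (Fin d) ℂ} (hM : M.PosSemidef) (i : Fin d) :
    0 ≤ (M i i).re := by
  have h : (0:ℂ) ≤ M i i := by
    exact hM.diag_nonneg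
  exact (Complex.le_def.mp h).1

lemma trace_re_eq_sum_eigenvalues {S : Matrix (Fin d) (Fin d) ℂ} (hS : S.IsHermitian) :
    S.trace.re = ∑ i, hS.eigenvalues i := by
  have hU : star (hS.eigenvectorUnitary : Matrix (Fin d) (Fin d) ℂ)
      * (hS.eigenvectorUnitary : Matrix (Fin d) (Fin d) ℂ) = 1 :=
    Matrix.mem_unitaryGroup_iff'.mp hS.eigenvectorUnitary.2
  conv_lhs => rw [hS.spectral_theorem]
  rw [Unitary.conjStarAlgAut_apply, trace_conj_diag hU]
  simp

lemma traceNorm_herm {X : Matrix (Fin d) (Fin d) ℂ} (hX : X.IsHermitian) :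
    traceNorm X = ∑ i, |hX.eigenvalues i| := by
  set U : Matrix (Fin d) (Fin d) ℂ := (hX.eigenvectorUnitary : Matrix (Fin d) (Fin d) ℂ)
    with hUdef
  have hU : star U * U = 1 := Matrix.mem_unitaryGroup_iff'.mp hX.eigenvectorUnitary.2
  set S : Matrix (Fin d) (Fin d) ℂ :=
    U * Matrix.diagonal (fun i => ((|hX.eigenvalues i| : ℝ) : ℂ)) * star U with hSdef
  have hSpsd : S.PosSemidef := psd_conj_diag (fun i => abs_nonneg _)
  have hXs : X = U * Matrix.diagonal (fun i => ((hX.eigenvalues i : ℝ) : ℂ)) * star U := by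
    rw [hUdef]; exact hX.spectral_theorem
  have hsq : S ^ 2 = Xᴴ * X := by
    rw [pow_two, hSdef, conj_diag_mul hU, hX.eq]
    conv_rhs => rw [hXs]
    rw [conj_diag_mul hU]
    have hfg : Matrix.diagonal (fun i => ((|hX.eigenvalues i| : ℝ) : ℂ) * ((|hX.eigenvalues i| : ℝ) : ℂ))
        = Matrix.diagonal (fun i => ((hX.eigenvalues i : ℝ) : ℂ) * ((hX.eigenvalues i : ℝ) : ℂ)) :=
      congrArg _ (funext fun i => by
        rw [← Complex.ofReal_mul, abs_mul_abs_self, Complex.ofReal_mul])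
    rw [hfg]
  have hsqrt : S = psdSqrt (Matrix.posSemidef_conjTranspose_mul_self X) :=
    psd_eq_sqrt_of_sq_eq hSpsd _ hsq
  rw [traceNorm_eq]
  rw [← hsqrt, hSdef, trace_conj_diag hU]
  simp

lemma traceNorm_sub_psd_le {P Q : Matrix (Fin d) (Fin d) ℂ} (hP : P.PosSemidef)
    (hQ : Q.PosSemidef) : traceNorm (P - Q) ≤ P.trace.re + Q.trace.re := by
  have hX : (P - Q).IsHermitian := hP.1.sub hQ.1
  set U : Matrix (Fin d) (Fin d) ℂ := (hX.eigenvectorUnitary : Matrix (Fin d) (Fin d) ℂ)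
    with hUdef
  have hUmul : star U * U = 1 := Matrix.mem_unitaryGroup_iff'.mp hX.eigenvectorUnitary.2
  have hU2 : U * star U = 1 := Matrix.mem_unitaryGroup_iff.mp hX.eigenvectorUnitary.2
  have hdiag : star U * (P - Q) * U
      = Matrix.diagonal (fun i => ((hX.eigenvalues i : ℝ) : ℂ)) := by
    conv_lhs => rw [hX.spectral_theorem]
    rw [Unitary.conjStarAlgAut_apply, ← hUdef, ← Matrix.mul_assoc,
      ← Matrix.mul_assoc, hUmul, Matrix.one_mul, Matrix.mul_assoc, hUmul, Matrix.mul_one]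
    rfl
  have hPU : (star U * P * U).PosSemidef := by
    rw [show star U * P * U = Uᴴ * P * U from by rw [Matrix.star_eq_conjTranspose]]
    exact hP.conjTranspose_mul_mul_same U
  have hQU : (star U * Q * U).PosSemidef := by
    rw [show star U * Q * U = Uᴴ * Q * U from by rw [Matrix.star_eq_conjTranspose]]
    exact hQ.conjTranspose_mul_mul_same U
  have hentry : ∀ i, hX.eigenvalues i
      = ((star U * P * U) i i).re - ((star U * Q * U) i i).re := by
    intro i
    have h1 : star U * (P - Q) * U = star U * P * U - star U * Q * U := by
      rw [Matrix.mul_sub, Matrix.sub_mul]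
    rw [h1] at hdiag
    have h2 := congrArg (fun M : Matrix (Fin d) (Fin d) ℂ => (M i i).re) hdiag
    simpa [Matrix.sub_apply] using h2.symm
  rw [traceNorm_herm hX]
  have htr : ∀ (M : Matrix (Fin d) (Fin d) ℂ), (star U * M * U).trace = M.trace := by
    intro M
    rw [Matrix.trace_mul_cycle, hU2, Matrix.one_mul]
  calc ∑ i, |hX.eigenvalues i|
      ≤ ∑ i, (((star U * P * U) i i).re + ((star U * Q * U) i i).re) := by
        apply Finset.sum_le_sum
        intro i _
        rw [hentry i]
        refine (abs_sub _ _).trans ?_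
        rw [abs_of_nonneg (psd_diag_re_nonneg hPU i), abs_of_nonneg (psd_diag_re_nonneg hQU i)]
    _ = P.trace.re + Q.trace.re := by
        rw [Finset.sum_add_distrib]
        congr 1
        · rw [← htr P]
          rw [show ((star U * P * U).trace) = ∑ i, (star U * P * U) i i from rfl,
            Complex.re_sum]
        · rw [← htr Q]
          rw [show ((star U * Q * U).trace) = ∑ i, (star U * Q * U) i i from rfl,
            Complex.re_sum]

lemma herm_decomp {X : Matrix (Fin d) (Fin d) ℂ} (hX : X.IsHermitian) :
    ∃ P Q : Matrix (Fin d) (Fin d) ℂ, P.PosSemidef ∧ Q.PosSemidef ∧ X = P - Q ∧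
      P.trace.re + Q.trace.re = traceNorm X := by
  set U : Matrix (Fin d) (Fin d) ℂ := (hX.eigenvectorUnitary : Matrix (Fin d) (Fin d) ℂ)
    with hUdef
  have hUmul : star U * U = 1 := Matrix.mem_unitaryGroup_iff'.mp hX.eigenvectorUnitary.2
  have hXs : X = U * Matrix.diagonal (fun i => ((hX.eigenvalues i : ℝ) : ℂ)) * star U := by
    rw [hUdef]; exact hX.spectral_theorem
  refine ⟨U * Matrix.diagonal (fun i => ((max (hX.eigenvalues i) 0 : ℝ) : ℂ)) * star U,
      U * Matrix.diagonal (fun i => ((max (-(hX.eigenvalues i)) 0 : ℝ) : ℂ)) * star U,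
      psd_conj_diag (fun i => le_max_right _ _), psd_conj_diag (fun i => le_max_right _ _),
      ?_, ?_⟩
  · have hdd : Matrix.diagonal (fun i => ((hX.eigenvalues i : ℝ) : ℂ))
        = Matrix.diagonal (fun i => ((max (hX.eigenvalues i) 0 : ℝ) : ℂ))
          - Matrix.diagonal (fun i => ((max (-(hX.eigenvalues i)) 0 : ℝ) : ℂ)) := by
      rw [Matrix.diagonal_sub]
      refine congrArg _ (funext fun i => ?_)
      rcases le_total 0 (hX.eigenvalues i) with h | h
      · rw [max_eq_left h, max_eq_right (neg_nonpos.mpr h), Complex.ofReal_zero, sub_zero]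
      · rw [max_eq_right h, max_eq_left (neg_nonneg.mpr h), Complex.ofReal_zero, zero_sub,
          ← Complex.ofReal_neg, neg_neg]
    conv_lhs => rw [hXs]
    rw [hdd, Matrix.mul_sub, Matrix.sub_mul]
  · rw [trace_conj_diag hUmul, trace_conj_diag hUmul, traceNorm_herm hX]
    rw [show ((∑ i, ((max (hX.eigenvalues i) 0 : ℝ) : ℂ)).re)
        = ∑ i, max (hX.eigenvalues i) 0 from by rw [Complex.re_sum]; simp]
    rw [show ((∑ i, ((max (-(hX.eigenvalues i)) 0 : ℝ) : ℂ)).re)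
        = ∑ i, max (-(hX.eigenvalues i)) 0 from by rw [Complex.re_sum]; simp]
    rw [← Finset.sum_add_distrib]
    apply Finset.sum_congr rfl
    intro i _
    rcases le_total 0 (hX.eigenvalues i) with h | h
    · rw [max_eq_left h, max_eq_right (neg_nonpos.mpr h), add_zero, abs_of_nonneg h]
    · rw [max_eq_right h, max_eq_left (neg_nonneg.mpr h), zero_add, abs_of_nonpos h]

lemma traceNorm_add_le_herm {A B : Matrix (Fin d) (Fin d) ℂ} (hA : A.IsHermitian)
    (hB : B.IsHermitian) : traceNorm (A + B) ≤ traceNorm A + traceNorm B := by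
  obtain ⟨P₁, Q₁, hP₁, hQ₁, hA1, hA2⟩ := herm_decomp hA
  obtain ⟨P₂, Q₂, hP₂, hQ₂, hB1, hB2⟩ := herm_decomp hB
  have h : A + B = (P₁ + P₂) - (Q₁ + Q₂) := by rw [hA1, hB1]; abel
  rw [h]
  calc traceNorm ((P₁ + P₂) - (Q₁ + Q₂))
      ≤ (P₁ + P₂).trace.re + (Q₁ + Q₂).trace.re :=
        traceNorm_sub_psd_le (hP₁.add hP₂) (hQ₁.add hQ₂)
    _ = (P₁.trace.re + Q₁.trace.re) + (P₂.trace.re + Q₂.trace.re) := by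
        rw [Matrix.trace_add, Matrix.trace_add, Complex.add_re, Complex.add_re]; ring
    _ = traceNorm A + traceNorm B := by rw [hA2, hB2]

lemma traceNorm_nonneg (X : Matrix (Fin d) (Fin d) ℂ) : 0 ≤ traceNorm X := by
  rw [traceNorm_eq]
  have h := posSemidef_psdSqrt (Matrix.posSemidef_conjTranspose_mul_self X)
  rw [show ((psdSqrt (Matrix.posSemidef_conjTranspose_mul_self X)).trace)
      = ∑ i, psdSqrt (Matrix.posSemidef_conjTranspose_mul_self X) i i from rfl]
  rw [Complex.re_sum]
  exact Finset.sum_nonneg fun i _ => psd_diag_re_nonneg h i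

end Spectral

section Fro
attribute [local instance] Matrix.frobeniusSeminormedAddCommGroup
  Matrix.frobeniusNormedAddCommGroup Matrix.frobeniusNormedSpace

variable {d : ℕ}

lemma trace_sq_re_eq {S : Matrix (Fin d) (Fin d) ℂ} (hS : S.IsHermitian) :
    ((S * S).trace).re = ∑ i, (hS.eigenvalues i)^2 := by
  have hU : star (hS.eigenvectorUnitary : Matrix (Fin d) (Fin d) ℂ)
      * (hS.eigenvectorUnitary : Matrix (Fin d) (Fin d) ℂ) = 1 :=
    Matrix.mem_unitaryGroup_iff'.mp hS.eigenvectorUnitary.2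
  conv_lhs => rw [hS.spectral_theorem]
  rw [Unitary.conjStarAlgAut_apply]
  rw [show (Matrix.diagonal (RCLike.ofReal ∘ hS.eigenvalues) : Matrix (Fin d) (Fin d) ℂ)
      = Matrix.diagonal (fun i => ((hS.eigenvalues i : ℝ) : ℂ)) from rfl]
  rw [conj_diag_mul hU, trace_conj_diag hU, Complex.re_sum]
  apply Finset.sum_congr rfl
  intro i _
  rw [← Complex.ofReal_mul, Complex.ofReal_re, sq]

set_option maxHeartbeats 1000000 in
lemma fro_sq (X : Matrix (Fin d) (Fin d) ℂ) : ‖X‖^2 = ((Xᴴ * X).trace).re := by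
  have hn : ‖X‖ = Real.sqrt (∑ i, ∑ j, ‖X i j‖^2) := by
    rw [Matrix.frobenius_norm_def, Real.sqrt_eq_rpow]
    congr 1
    refine Finset.sum_congr rfl fun i _ => Finset.sum_congr rfl fun j _ => ?_
    rw [← Real.rpow_natCast ‖X i j‖ 2]
    norm_num
  rw [hn, Real.sq_sqrt (by positivity)]
  have htr : (Xᴴ * X).trace = ∑ j, ∑ i, star (X i j) * X i j := by
    simp [Matrix.trace, Matrix.diag, Matrix.mul_apply, Matrix.conjTranspose_apply]
  rw [htr, Complex.re_sum, Finset.sum_comm]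
  apply Finset.sum_congr rfl
  intro i _
  rw [Complex.re_sum]
  apply Finset.sum_congr rfl
  intro j _
  rw [Complex.star_def, mul_comm, Complex.mul_conj, Complex.ofReal_re,
    Complex.sq_norm]

lemma fro_le_traceNorm (X : Matrix (Fin d) (Fin d) ℂ) : ‖X‖ ≤ traceNorm X := by
  set S := psdSqrt (Matrix.posSemidef_conjTranspose_mul_self X) with hSdef
  have hpsd : S.PosSemidef := posSemidef_psdSqrt (Matrix.posSemidef_conjTranspose_mul_self X)
  have htn : traceNorm X = ∑ i, hpsd.1.eigenvalues i := trace_re_eq_sum_eigenvalues hpsd.1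
  have hν : ∀ i, 0 ≤ hpsd.1.eigenvalues i := hpsd.eigenvalues_nonneg
  have hfsq : ‖X‖^2 = ∑ i, (hpsd.1.eigenvalues i)^2 := by
    rw [fro_sq, ← psdSqrt_mul_self (Matrix.posSemidef_conjTranspose_mul_self X)]
    exact trace_sq_re_eq hpsd.1
  have h2 : ‖X‖^2 ≤ (traceNorm X)^2 := by
    rw [hfsq, htn]
    exact Finset.sum_sq_le_sq_sum_of_nonneg (fun i _ => hν i)
  exact le_of_pow_le_pow_left₀ two_ne_zero (traceNorm_nonneg X) h2

lemma traceNorm_le_fro (X : Matrix (Fin d) (Fin d) ℂ) :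
    traceNorm X ≤ Real.sqrt d * ‖X‖ := by
  set S := psdSqrt (Matrix.posSemidef_conjTranspose_mul_self X) with hSdef
  have hpsd : S.PosSemidef := posSemidef_psdSqrt (Matrix.posSemidef_conjTranspose_mul_self X)
  have htn : traceNorm X = ∑ i, hpsd.1.eigenvalues i := trace_re_eq_sum_eigenvalues hpsd.1
  have hν : ∀ i, 0 ≤ hpsd.1.eigenvalues i := hpsd.eigenvalues_nonneg
  have hfsq : ‖X‖^2 = ∑ i, (hpsd.1.eigenvalues i)^2 := by
    rw [fro_sq, ← psdSqrt_mul_self (Matrix.posSemidef_conjTranspose_mul_self X)]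
    exact trace_sq_re_eq hpsd.1
  have h2 : (traceNorm X)^2 ≤ d * ‖X‖^2 := by
    rw [hfsq, htn]
    calc (∑ i, hpsd.1.eigenvalues i)^2
        ≤ (Finset.univ : Finset (Fin d)).card * ∑ i, (hpsd.1.eigenvalues i)^2 :=
          sq_sum_le_card_mul_sum_sq
      _ = d * ∑ i, (hpsd.1.eigenvalues i)^2 := by rw [Finset.card_univ, Fintype.card_fin]
  calc traceNorm X = Real.sqrt ((traceNorm X)^2) := (Real.sqrt_sq (traceNorm_nonneg X)).symm
    _ ≤ Real.sqrt (d * ‖X‖^2) := Real.sqrt_le_sqrt h2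
    _ = Real.sqrt d * ‖X‖ := by
        rw [Real.sqrt_mul (Nat.cast_nonneg d), Real.sqrt_sq (norm_nonneg X)]

lemma traceNorm_pos {X : Matrix (Fin d) (Fin d) ℂ} (hX : X ≠ 0) : 0 < traceNorm X :=
  lt_of_lt_of_le (norm_pos_iff.mpr hX) (fro_le_traceNorm X)

lemma exists_fro_bound (L : MatEnd d) : ∃ C : ℝ, 0 ≤ C ∧ ∀ X, ‖L X‖ ≤ C * ‖X‖ := by
  have : FiniteDimensional ℂ (Matrix (Fin d) (Fin d) ℂ) := by infer_instance
  obtain ⟨C, hC, h⟩ :=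
    SemilinearMapClass.bound_of_continuous L (LinearMap.continuous_of_finiteDimensional L)
  exact ⟨C, hC.le, h⟩

lemma norm1to1_nonneg (L : MatEnd d) : 0 ≤ norm1to1 L :=
  Real.sSup_nonneg (fun r hr => by
    obtain ⟨X, _, rfl⟩ := hr
    exact div_nonneg (traceNorm_nonneg _) (traceNorm_nonneg _))

lemma traceNorm_apply_le (L : MatEnd d) (X : Matrix (Fin d) (Fin d) ℂ) :
    traceNorm (L X) ≤ norm1to1 L * traceNorm X := by
  rcases eq_or_ne X 0 with rfl | hX
  · rw [map_zero, traceNorm_zero, mul_zero]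
  · obtain ⟨C, hC0, hC⟩ := exists_fro_bound L
    have hb : BddAbove {r | ∃ Y, Y ≠ 0 ∧ r = traceNorm (L Y) / traceNorm Y} := by
      refine ⟨Real.sqrt d * C, fun r ⟨Y, hY, hr⟩ => ?_⟩
      have h1 : traceNorm (L Y) ≤ Real.sqrt d * C * traceNorm Y :=
        calc traceNorm (L Y) ≤ Real.sqrt d * ‖L Y‖ := traceNorm_le_fro (L Y)
          _ ≤ Real.sqrt d * (C * ‖Y‖) := by
              apply mul_le_mul_of_nonneg_left (hC Y) (Real.sqrt_nonneg _)
          _ ≤ Real.sqrt d * (C * traceNorm Y) := by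
              apply mul_le_mul_of_nonneg_left ?_ (Real.sqrt_nonneg _)
              exact mul_le_mul_of_nonneg_left (fro_le_traceNorm Y) hC0
          _ = Real.sqrt d * C * traceNorm Y := by ring
      rw [hr, div_le_iff₀ (traceNorm_pos hY)]
      exact h1
    have hmem : traceNorm (L X) / traceNorm X
        ∈ {r | ∃ Y, Y ≠ 0 ∧ r = traceNorm (L Y) / traceNorm Y} := ⟨X, hX, rfl⟩
    have hle : traceNorm (L X) / traceNorm X ≤ norm1to1 L := le_csSup hb hmem
    calc traceNorm (L X) = (traceNorm (L X) / traceNorm X) * traceNorm X :=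
          (div_mul_cancel₀ _ (ne_of_gt (traceNorm_pos hX))).symm
      _ ≤ norm1to1 L * traceNorm X :=
          mul_le_mul_of_nonneg_right hle (traceNorm_nonneg X)

end Fro

section Maps
variable {d : ℕ}

lemma isPos_pow {T : MatEnd d} (h : IsPos T) : ∀ n, IsPos (T ^ n) := by
  intro n
  induction n with
  | zero => intro X hX; simpa using hX
  | succ n ih =>
      intro X hX
      rw [pow_succ', Module.End.mul_apply]
      exact h _ (ih X hX)

lemma isTP_pow {T : MatEnd d} (h : IsTP T) : ∀ n, IsTP (T ^ n) := by
  intro n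
  induction n with
  | zero => intro X; simp
  | succ n ih =>
      intro X
      rw [pow_succ', Module.End.mul_apply, h, ih]

lemma isHermitian_map {T : MatEnd d} (hT : IsPos T) {X : Matrix (Fin d) (Fin d) ℂ}
    (hX : X.IsHermitian) : (T X).IsHermitian := by
  obtain ⟨P, Q, hP, hQ, hXPQ, -⟩ := herm_decomp hX
  rw [hXPQ, map_sub]
  exact ((hT P hP).1).sub ((hT Q hQ).1)

set_option maxHeartbeats 1000000 in
lemma traceNorm_map_le {T : MatEnd d} (hTP : IsTP T) (hTpos : IsPos T)
    {X : Matrix (Fin d) (Fin d) ℂ} (hX : X.IsHermitian) :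
    traceNorm (T X) ≤ traceNorm X := by
  obtain ⟨P, Q, hP, hQ, hXPQ, htr⟩ := herm_decomp hX
  conv_lhs => rw [hXPQ, map_sub]
  calc traceNorm (T P - T Q) ≤ (T P).trace.re + (T Q).trace.re :=
        traceNorm_sub_psd_le (hTpos P hP) (hTpos Q hQ)
    _ = P.trace.re + Q.trace.re := by rw [hTP P, hTP Q]
    _ = traceNorm X := htr

lemma isHermitian_finsum {ι : Type*} (s : Finset ι) (f : ι → Matrix (Fin d) (Fin d) ℂ)
    (hf : ∀ i ∈ s, (f i).IsHermitian) : (∑ i ∈ s, f i).IsHermitian := by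
  rw [Matrix.IsHermitian, Matrix.conjTranspose_sum]
  exact Finset.sum_congr rfl fun i hi => hf i hi

lemma traceNorm_sum_le {ι : Type*} (s : Finset ι) (f : ι → Matrix (Fin d) (Fin d) ℂ)
    (hf : ∀ i ∈ s, (f i).IsHermitian) :
    traceNorm (∑ i ∈ s, f i) ≤ ∑ i ∈ s, traceNorm (f i) := by
  classical
  induction s using Finset.induction_on with
  | empty => simp [traceNorm_zero]
  | insert _ _ hnotmem ih =>
      rename_i a s
      rw [Finset.sum_insert hnotmem, Finset.sum_insert hnotmem]
      have ha : (f a).IsHermitian := hf a (Finset.mem_insert_self a s)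
      have hs : ∀ i ∈ s, (f i).IsHermitian := fun i hi =>
        hf i (Finset.mem_insert_of_mem hi)
      calc traceNorm (f a + ∑ i ∈ s, f i)
          ≤ traceNorm (f a) + traceNorm (∑ i ∈ s, f i) :=
            traceNorm_add_le_herm ha (isHermitian_finsum s f hs)
        _ ≤ traceNorm (f a) + ∑ i ∈ s, traceNorm (f i) := by
            exact add_le_add_right (ih hs) _
end Maps

section Scalar

lemma sum_min_le {K μ : ℝ} (hK : 1 ≤ K) (hμ0 : 0 ≤ μ) (hμ1 : μ < 1) (n : ℕ) :
    ∑ m ∈ Finset.range n, min 1 (K * μ ^ m)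
      ≤ (⌈Real.log (1 / K) / Real.log μ⌉₊ : ℝ) + 1 / (1 - μ) := by
  set nh := ⌈Real.log (1 / K) / Real.log μ⌉₊ with hnh
  have h1μ : 0 < 1 - μ := by linarith
  have hone : 1 ≤ 1 / (1 - μ) := by rw [le_div_iff₀ h1μ]; linarith
  rcases eq_or_lt_of_le hμ0 with hμ | hμ
  · have hle1 : ∑ m ∈ Finset.range n, min 1 (K * μ ^ m) ≤ 1 := by
      rcases Nat.eq_zero_or_pos n with rfl | hn
      · simp
      · rw [Finset.sum_eq_single_of_mem 0 (Finset.mem_range.mpr hn)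
          (fun m _ hm => by rw [← hμ, zero_pow hm, mul_zero, min_eq_right zero_le_one])]
        rw [pow_zero, mul_one, min_eq_left hK]
    have : (0:ℝ) ≤ nh := Nat.cast_nonneg _
    linarith
  · have hμne : μ ≠ 1 := ne_of_lt hμ1
    have hK0 : (0:ℝ) < K := lt_of_lt_of_le one_pos hK
    have hKμ : K * μ ^ nh ≤ 1 := by
      have hlogμ : Real.log μ < 0 := Real.log_neg hμ hμ1
      have hceil : Real.log (1 / K) / Real.log μ ≤ (nh : ℝ) := Nat.le_ceil _
      have h2 : (nh : ℝ) * Real.log μ ≤ Real.log (1 / K) :=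
        (div_le_iff_of_neg hlogμ).mp hceil
      have hlK : Real.log (1 / K) = - Real.log K := by rw [one_div, Real.log_inv]
      have hpos : 0 < K * μ ^ nh := by positivity
      have hlog : Real.log (K * μ ^ nh) ≤ 0 := by
        rw [Real.log_mul (ne_of_gt hK0) (by positivity), Real.log_pow]
        rw [hlK] at h2
        linarith
      exact (Real.log_nonpos_iff hpos.le).mp hlog
    have hterm : ∀ m, nh ≤ m → min 1 (K * μ ^ m) ≤ μ ^ (m - nh) := by
      intro m hm
      refine (min_le_right _ _).trans ?_
      have h3 : K * μ ^ m = (K * μ ^ nh) * μ ^ (m - nh) := by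
        rw [mul_assoc, ← pow_add, Nat.add_sub_cancel' hm]
      rw [h3]
      calc (K * μ ^ nh) * μ ^ (m - nh) ≤ 1 * μ ^ (m - nh) :=
            mul_le_mul_of_nonneg_right hKμ (by positivity)
        _ = μ ^ (m - nh) := one_mul _
    have hmin0 : ∀ m : ℕ, (0:ℝ) ≤ min 1 (K * μ ^ m) := fun m =>
      le_min zero_le_one (by positivity)
    calc ∑ m ∈ Finset.range n, min 1 (K * μ ^ m)
        ≤ ∑ m ∈ Finset.range (nh + n), min 1 (K * μ ^ m) :=
          Finset.sum_le_sum_of_subset_of_nonneg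
            (Finset.range_subset_range.mpr (by omega)) (fun m _ _ => hmin0 m)
      _ = ∑ m ∈ Finset.range nh, min 1 (K * μ ^ m)
          + ∑ m ∈ Finset.Ico nh (nh + n), min 1 (K * μ ^ m) := by
          rw [Finset.range_eq_Ico,
            ← Finset.sum_Ico_consecutive _ (Nat.zero_le nh) (Nat.le_add_right nh n), ← Finset.range_eq_Ico]
      _ ≤ (nh : ℝ) + 1 / (1 - μ) := by
          apply add_le_add
          · calc ∑ m ∈ Finset.range nh, min 1 (K * μ ^ m)
                ≤ ∑ _m ∈ Finset.range nh, (1:ℝ) :=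
                  Finset.sum_le_sum fun m _ => min_le_left _ _
              _ = (nh : ℝ) := by rw [Finset.sum_const, Finset.card_range]; simp
          · calc ∑ m ∈ Finset.Ico nh (nh + n), min 1 (K * μ ^ m)
                ≤ ∑ m ∈ Finset.Ico nh (nh + n), μ ^ (m - nh) :=
                  Finset.sum_le_sum fun m hm =>
                    hterm m (Finset.mem_Ico.mp hm).1
              _ = ∑ j ∈ Finset.range n, μ ^ j := by
                  rw [Finset.sum_Ico_eq_sum_range]
                  simp
              _ ≤ 1 / (1 - μ) := by
                  rw [geom_sum_eq hμne n]
                  rw [show (μ ^ n - 1) / (μ - 1) = (1 - μ ^ n) / (1 - μ) from by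
                    rw [← neg_div_neg_eq]; ring_nf]
                  have hnum : 1 - μ ^ n ≤ 1 := by nlinarith [pow_nonneg hμ0 n]
                  gcongr

end Scalar

/-- asymptotic perturbation bound (limsup version). -/
theorem asymptotic_perturbation {d : ℕ} (T E Tinf : MatEnd d)
    (hTTP : IsTP T) (hTPos : IsPos T) (hETP : IsTP E) (hEPos : IsPos E)
    (ρ : Matrix (Fin d) (Fin d) ℂ) (hρ : IsDensity ρ) (hfix : T ρ = ρ)
    (huniq : ∀ ρ' : Matrix (Fin d) (Fin d) ℂ, IsDensity ρ' → T ρ' = ρ' → ρ' = ρ)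
    (hTinf : ∀ X, Tinf X = X.trace • ρ)
    (K μ : ℝ) (hK : 1 ≤ K) (hμ0 : 0 ≤ μ) (hμ1 : μ < 1)
    (hconv : ∀ n : ℕ, norm1to1 (T ^ n - Tinf) ≤ K * μ ^ n)
    (ρ₀ σ₀ : Matrix (Fin d) (Fin d) ℂ) (hρ₀ : IsDensity ρ₀) (hσ₀ : IsDensity σ₀) :
    Filter.limsup (fun n : ℕ => traceNorm ((T ^ n) ρ₀ - (E ^ n) σ₀)) Filter.atTop ≤
      ((⌈Real.log (1 / K) / Real.log μ⌉₊ : ℝ) + 1 / (1 - μ)) * norm1to1 (E - T) := by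
  have hρ₀h : ρ₀.IsHermitian := hρ₀.1.1
  have hσ₀h : σ₀.IsHermitian := hσ₀.1.1
  set NT := norm1to1 (E - T) with hNT
  set nh := ⌈Real.log (1 / K) / Real.log μ⌉₊ with hnh
  set B : ℝ := ((nh : ℝ) + 1 / (1 - μ)) * NT with hB
  have hNT0 : 0 ≤ NT := norm1to1_nonneg _
  have hEk_psd : ∀ k, ((E ^ k) σ₀).PosSemidef := fun k => isPos_pow hEPos k σ₀ hσ₀.1
  have hEk_tn : ∀ k, traceNorm ((E ^ k) σ₀) = 1 := fun k => by
    rw [traceNorm_psd (hEk_psd k), isTP_pow hETP k σ₀, hσ₀.2, Complex.one_re]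
  set g : ℕ → Matrix (Fin d) (Fin d) ℂ := fun k => (T - E) ((E ^ k) σ₀) with hg
  have hgval : ∀ k, g k = T ((E ^ k) σ₀) - E ((E ^ k) σ₀) := fun k =>
    LinearMap.sub_apply _ _ _
  have hg_herm : ∀ k, (g k).IsHermitian := fun k => by
    rw [hgval k]
    exact ((hTPos _ (hEk_psd k)).1).sub ((hEPos _ (hEk_psd k)).1)
  have hg_tr : ∀ k, (g k).trace = 0 := fun k => by
    rw [hgval k, Matrix.trace_sub, hTTP, hETP, sub_self]
  have hg_tn : ∀ k, traceNorm (g k) ≤ NT := fun k => by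
    have hneg : g k = -((E - T) ((E ^ k) σ₀)) := by
      rw [hgval k, LinearMap.sub_apply, neg_sub]
    rw [hneg, traceNorm_neg]
    calc traceNorm ((E - T) ((E ^ k) σ₀)) ≤ NT * traceNorm ((E ^ k) σ₀) :=
          traceNorm_apply_le _ _
      _ = NT := by rw [hEk_tn k, mul_one]
  have key : ∀ (m : ℕ) (Z : Matrix (Fin d) (Fin d) ℂ), Z.IsHermitian → Z.trace = 0 →
      traceNorm ((T ^ m) Z) ≤ min 1 (K * μ ^ m) * traceNorm Z := by
    intro m Z hZ h0
    rw [min_mul_of_nonneg _ _ (traceNorm_nonneg Z)]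
    refine le_min ?_ ?_
    · rw [one_mul]
      exact traceNorm_map_le (isTP_pow hTTP m) (isPos_pow hTPos m) hZ
    · have hz : (T ^ m) Z = (T ^ m - Tinf) Z := by
        rw [LinearMap.sub_apply, hTinf, h0, zero_smul, sub_zero]
      rw [hz]
      calc traceNorm ((T ^ m - Tinf) Z) ≤ norm1to1 (T ^ m - Tinf) * traceNorm Z :=
            traceNorm_apply_le _ _
        _ ≤ K * μ ^ m * traceNorm Z :=
            mul_le_mul_of_nonneg_right (hconv m) (traceNorm_nonneg Z)
  set Δ := ρ₀ - σ₀ with hΔ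
  have hΔh : Δ.IsHermitian := hρ₀h.sub hσ₀h
  have hΔtr : Δ.trace = 0 := by rw [hΔ, Matrix.trace_sub, hρ₀.2, hσ₀.2, sub_self]
  have hσ₀negh : (-σ₀).IsHermitian := by
    rw [Matrix.IsHermitian, Matrix.conjTranspose_neg, hσ₀h.eq]
  have hΔtn : traceNorm Δ ≤ 2 := by
    have h : Δ = ρ₀ + -σ₀ := by rw [hΔ, sub_eq_add_neg]
    rw [h]
    calc traceNorm (ρ₀ + -σ₀) ≤ traceNorm ρ₀ + traceNorm (-σ₀) :=
          traceNorm_add_le_herm hρ₀h hσ₀negh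
      _ = 1 + 1 := by
          rw [traceNorm_neg, traceNorm_psd hρ₀.1, traceNorm_psd hσ₀.1, hρ₀.2, hσ₀.2,
            Complex.one_re]
      _ = 2 := by norm_num
  have tele : ∀ n, (T ^ n) ρ₀ - (E ^ n) σ₀
      = (T ^ n) Δ + ∑ k ∈ Finset.range n, (T ^ (n - 1 - k)) (g k) := by
    intro n
    induction n with
    | zero => simp [hΔ]
    | succ n ih =>
        have hstep : (T ^ (n + 1)) ρ₀ - (E ^ (n + 1)) σ₀
            = T ((T ^ n) ρ₀ - (E ^ n) σ₀) + g n := by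
          rw [map_sub, hgval n, pow_succ' T, Module.End.mul_apply, pow_succ' E,
            Module.End.mul_apply]
          abel
        have h1 : T ((T ^ n) Δ) = (T ^ (n + 1)) Δ := by
          rw [pow_succ' T, Module.End.mul_apply]
        have h2 : ∀ k ∈ Finset.range n,
            T ((T ^ (n - 1 - k)) (g k)) = (T ^ (n - k)) (g k) := by
          intro k hk
          have hk' : k < n := Finset.mem_range.mp hk
          rw [show n - k = (n - 1 - k) + 1 from by omega, pow_succ' T, Module.End.mul_apply]
        rw [hstep, ih, map_add, map_sum, h1, Finset.sum_congr rfl h2,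
          Finset.sum_range_succ]
        simp only [show ∀ k : ℕ, n + 1 - 1 - k = n - k from fun k => by omega]
        rw [Nat.sub_self, pow_zero, Module.End.one_apply]
        abel
  have hmin0 : ∀ m : ℕ, (0:ℝ) ≤ min 1 (K * μ ^ m) := fun m =>
    le_min zero_le_one (by positivity)
  have hbound : ∀ n, traceNorm ((T ^ n) ρ₀ - (E ^ n) σ₀) ≤ 2 * (K * μ ^ n) + B := by
    intro n
    rw [tele n]
    have hherm1 : ((T ^ n) Δ).IsHermitian := isHermitian_map (isPos_pow hTPos n) hΔh
    have hhermk : ∀ k ∈ Finset.range n, ((T ^ (n - 1 - k)) (g k)).IsHermitian := fun k _ =>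
      isHermitian_map (isPos_pow hTPos _) (hg_herm k)
    calc traceNorm ((T ^ n) Δ + ∑ k ∈ Finset.range n, (T ^ (n - 1 - k)) (g k))
        ≤ traceNorm ((T ^ n) Δ)
          + traceNorm (∑ k ∈ Finset.range n, (T ^ (n - 1 - k)) (g k)) :=
          traceNorm_add_le_herm hherm1 (isHermitian_finsum _ _ hhermk)
      _ ≤ traceNorm ((T ^ n) Δ)
          + ∑ k ∈ Finset.range n, traceNorm ((T ^ (n - 1 - k)) (g k)) :=
          add_le_add_right (traceNorm_sum_le _ _ hhermk) _
      _ ≤ 2 * (K * μ ^ n) + B := by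
          apply add_le_add
          · calc traceNorm ((T ^ n) Δ) ≤ min 1 (K * μ ^ n) * traceNorm Δ :=
                  key n Δ hΔh hΔtr
              _ ≤ (K * μ ^ n) * 2 :=
                  mul_le_mul (min_le_right _ _) hΔtn (traceNorm_nonneg Δ) (by positivity)
              _ = 2 * (K * μ ^ n) := by ring
          · calc ∑ k ∈ Finset.range n, traceNorm ((T ^ (n - 1 - k)) (g k))
                ≤ ∑ k ∈ Finset.range n, min 1 (K * μ ^ (n - 1 - k)) * NT := by
                  refine Finset.sum_le_sum fun k _ => ?_
                  calc traceNorm ((T ^ (n - 1 - k)) (g k))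
                      ≤ min 1 (K * μ ^ (n - 1 - k)) * traceNorm (g k) :=
                        key _ _ (hg_herm k) (hg_tr k)
                    _ ≤ min 1 (K * μ ^ (n - 1 - k)) * NT :=
                        mul_le_mul_of_nonneg_left (hg_tn k) (hmin0 _)
              _ = (∑ k ∈ Finset.range n, min 1 (K * μ ^ (n - 1 - k))) * NT := by
                  rw [Finset.sum_mul]
              _ = (∑ m ∈ Finset.range n, min 1 (K * μ ^ m)) * NT := by
                  rw [Finset.sum_range_reflect (fun m => min 1 (K * μ ^ m)) n]
              _ ≤ ((nh : ℝ) + 1 / (1 - μ)) * NT :=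
                  mul_le_mul_of_nonneg_right (sum_min_le hK hμ0 hμ1 n) hNT0
  have hcob : IsCoboundedUnder (· ≤ ·) atTop
      (fun n : ℕ => traceNorm ((T ^ n) ρ₀ - (E ^ n) σ₀)) :=
    (Filter.isBoundedUnder_of ⟨0, fun n => traceNorm_nonneg _⟩ :
      IsBoundedUnder (· ≥ ·) atTop _).isCoboundedUnder_le
  have hto : Tendsto (fun n : ℕ => 2 * (K * μ ^ n) + B) atTop (nhds B) := by
    have h1 : Tendsto (fun n : ℕ => μ ^ n) atTop (nhds 0) :=
      tendsto_pow_atTop_nhds_zero_of_lt_one hμ0 hμ1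
    have h2 := (h1.const_mul (2 * K)).add_const B
    simp only [mul_zero, zero_add] at h2
    convert h2 using 2 with n
    ring
  calc Filter.limsup (fun n : ℕ => traceNorm ((T ^ n) ρ₀ - (E ^ n) σ₀)) Filter.atTop
      ≤ Filter.limsup (fun n : ℕ => 2 * (K * μ ^ n) + B) Filter.atTop :=
        Filter.limsup_le_limsup (Filter.Eventually.of_forall hbound) hcob
          hto.isBoundedUnder_le
    _ = B := hto.limsup_eq
end
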